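/- Let a and b be integers, not both zero, and let g = gcd(a,b). If ab ≥ 0, then h_∞(a,b) = 0; if ab < 0, then h_∞(a,b) = min(g/|a|, g/|b|). -/

import Mathlib

/-- `fx a x = liminf_{t → x} ∑ᵢ {aᵢ t}`, where `{y}` is the fractional part and the limit
is over the punctured neighborhood of `x`. -/
noncomputable def fx {n : ℕ} (a : Fin n → ℤ) (x : ℝ) : ℝ :=
  Filter.liminf (fun t : ℝ => ∑ i, Int.fract ((a i : ℝ) * t)) (nhdsWithin x {x}ᶜ)

/-- `hinf a` is the minimum of `fx a x` over `x ∈ [0, 1)`. -/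
noncomputable def hinf {n : ℕ} (a : Fin n → ℤ) : ℝ :=
  sInf (fx a '' Set.Ico (0 : ℝ) 1)

open Filter Topology Set

/-- The two-variable summand. -/
noncomputable def Ftwo (a b : ℤ) : ℝ → ℝ := fun t => Int.fract ((a:ℝ)*t) + Int.fract ((b:ℝ)*t)

lemma Ftwo_nonneg (a b : ℤ) (t : ℝ) : 0 ≤ Ftwo a b t :=
  add_nonneg (Int.fract_nonneg _) (Int.fract_nonneg _)

lemma Ftwo_le_two (a b : ℤ) (t : ℝ) : Ftwo a b t ≤ 2 := by
  have h1 := (Int.fract_lt_one ((a:ℝ)*t)).le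
  have h2 := (Int.fract_lt_one ((b:ℝ)*t)).le
  unfold Ftwo; linarith

lemma Ftwo_comm (a b : ℤ) : Ftwo a b = Ftwo b a := by
  funext t; exact add_comm _ _

lemma fx_eq (a b : ℤ) (x : ℝ) : fx ![a,b] x = liminf (Ftwo a b) (𝓝[≠] x) := by
  unfold fx Ftwo
  congr 1
  funext t
  simp [Fin.sum_univ_two]

lemma liminf_le_of_tendsto_side {x c : ℝ} {a b : ℤ} {s : Set ℝ}
    (hs : s ⊆ {x}ᶜ) [NeBot (𝓝[s] x)] (h : Tendsto (Ftwo a b) (𝓝[s] x) (𝓝 c)) :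
    liminf (Ftwo a b) (𝓝[≠] x) ≤ c := by
  have heq : liminf (Ftwo a b) (𝓝[s] x) = c := h.liminf_eq
  rw [← heq]
  exact liminf_le_liminf_of_le (nhdsWithin_mono x hs)
    (isBoundedUnder_of ⟨0, fun t => Ftwo_nonneg a b t⟩)
    h.isBoundedUnder_le.isCoboundedUnder_ge

lemma le_liminf_of_eventually {x c : ℝ} {a b : ℤ} (h : ∀ᶠ t in 𝓝[≠] x, c ≤ Ftwo a b t) :
    c ≤ liminf (Ftwo a b) (𝓝[≠] x) :=
  le_liminf_of_le (isCoboundedUnder_ge_of_le _ (fun t => Ftwo_le_two a b t)) h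

lemma liminf_Ftwo_nonneg (a b : ℤ) (x : ℝ) : 0 ≤ liminf (Ftwo a b) (𝓝[≠] x) :=
  le_liminf_of_eventually (Eventually.of_forall fun t => Ftwo_nonneg a b t)

lemma fx_two_nonneg (a b : ℤ) (x : ℝ) : 0 ≤ fx ![a,b] x := by
  rw [fx_eq]; exact liminf_Ftwo_nonneg a b x

lemma tendsto_fract_mul_pos {a : ℤ} (ha : 0 < a) {x : ℝ} {k : ℤ} (hk : (a:ℝ)*x = k) :
    Tendsto (fun t : ℝ => Int.fract ((a:ℝ)*t)) (𝓝[>] x) (𝓝 0) := by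
  have ha' : (0:ℝ) < a := by exact_mod_cast ha
  have h1 : Tendsto (fun t : ℝ => (a:ℝ)*t) (𝓝[>] x) (𝓝[≥] (k:ℝ)) := by
    apply tendsto_nhdsWithin_of_tendsto_nhds_of_eventually_within
    · have : Tendsto (fun t : ℝ => (a:ℝ)*t) (𝓝 x) (𝓝 ((a:ℝ)*x)) :=
        (continuous_const.mul continuous_id : Continuous fun t : ℝ => (a:ℝ)*t).tendsto x
      rw [hk] at this
      exact this.mono_left nhdsWithin_le_nhds
    · filter_upwards [self_mem_nhdsWithin] with t (ht : x < t)
      have : (a:ℝ)*x ≤ (a:ℝ)*t := by nlinarith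
      rw [hk] at this
      exact this
  exact (tendsto_fract_right' k).comp h1

lemma tendsto_fract_mul_neg {a : ℤ} (ha : a < 0) {x : ℝ} {k : ℤ} (hk : (a:ℝ)*x = k) :
    Tendsto (fun t : ℝ => Int.fract ((a:ℝ)*t)) (𝓝[<] x) (𝓝 0) := by
  have ha' : (a:ℝ) < 0 := by exact_mod_cast ha
  have h1 : Tendsto (fun t : ℝ => (a:ℝ)*t) (𝓝[<] x) (𝓝[≥] (k:ℝ)) := by
    apply tendsto_nhdsWithin_of_tendsto_nhds_of_eventually_within
    · have : Tendsto (fun t : ℝ => (a:ℝ)*t) (𝓝 x) (𝓝 ((a:ℝ)*x)) :=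
        (continuous_const.mul continuous_id : Continuous fun t : ℝ => (a:ℝ)*t).tendsto x
      rw [hk] at this
      exact this.mono_left nhdsWithin_le_nhds
    · filter_upwards [self_mem_nhdsWithin] with t (ht : t < x)
      have : (a:ℝ)*x ≤ (a:ℝ)*t := by nlinarith
      rw [hk] at this
      exact this
  exact (tendsto_fract_right' k).comp h1

lemma continuousAt_fract_mul {b : ℤ} {x : ℝ} (h : Int.fract ((b:ℝ)*x) ≠ 0) :
    Tendsto (fun t : ℝ => Int.fract ((b:ℝ)*t)) (𝓝 x) (𝓝 (Int.fract ((b:ℝ)*x))) := by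
  have hne : (b:ℝ)*x ≠ ⌊(b:ℝ)*x⌋ := by
    intro he
    apply h
    rw [Int.fract, he]; simp
  exact (continuousAt_fract hne).comp ((continuous_const.mul continuous_id).continuousAt)

lemma eventually_not_int {a : ℤ} (ha : a ≠ 0) (x : ℝ) :
    ∀ᶠ t in 𝓝[≠] x, Int.fract ((a:ℝ)*t) ≠ 0 := by
  have haR : (a:ℝ) ≠ 0 := Int.cast_ne_zero.mpr ha
  by_cases h : Int.fract ((a:ℝ)*x) = 0
  · have hball : Metric.ball x (1/|(a:ℝ)|) ∈ 𝓝 x :=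
      Metric.ball_mem_nhds x (by positivity)
    filter_upwards [nhdsWithin_le_nhds hball, self_mem_nhdsWithin] with t ht (htx : t ≠ x)
    intro hft
    have hx' : (a:ℝ)*x = (⌊(a:ℝ)*x⌋ : ℤ) := by
      have := Int.fract_add_floor ((a:ℝ)*x)
      rw [h] at this; linarith [this]
    have ht' : (a:ℝ)*t = (⌊(a:ℝ)*t⌋ : ℤ) := by
      have := Int.fract_add_floor ((a:ℝ)*t)
      rw [hft] at this; linarith [this]
    have hd : (a:ℝ)*(t - x) = ((⌊(a:ℝ)*t⌋ - ⌊(a:ℝ)*x⌋ : ℤ) : ℝ) := by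
      rw [mul_sub, ht', hx', ← Int.cast_sub]
      simp
    have hne : (⌊(a:ℝ)*t⌋ - ⌊(a:ℝ)*x⌋ : ℤ) ≠ 0 := by
      intro h0
      rw [h0] at hd
      simp only [Int.cast_zero] at hd
      have : t - x = 0 := by
        rcases mul_eq_zero.mp hd with h' | h'
        · exact absurd h' haR
        · exact h'
      exact htx (by linarith)
    have h1 : (1:ℝ) ≤ |((⌊(a:ℝ)*t⌋ - ⌊(a:ℝ)*x⌋ : ℤ) : ℝ)| := by
      rw [← Int.cast_abs]
      exact_mod_cast Int.one_le_abs hne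
    rw [← hd, abs_mul] at h1
    have hlt : |t - x| < 1/|(a:ℝ)| := by
      have := Metric.mem_ball.mp ht
      rwa [Real.dist_eq] at this
    have hapos : 0 < |(a:ℝ)| := abs_pos.mpr haR
    rw [lt_div_iff₀ hapos] at hlt
    nlinarith [abs_nonneg (t - x)]
  · have hcont : Tendsto (fun t : ℝ => Int.fract ((a:ℝ)*t)) (𝓝 x) (𝓝 (Int.fract ((a:ℝ)*x))) := by
      have hne : (a:ℝ)*x ≠ ⌊(a:ℝ)*x⌋ := by
        intro he
        apply h
        rw [Int.fract, he]; simp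
      exact (continuousAt_fract hne).comp ((continuous_const.mul continuous_id).continuousAt)
    exact (hcont.eventually_ne h).filter_mono nhdsWithin_le_nhds

lemma pointwise_bound {a b : ℤ} (ha : 0 < a) (hb : b < 0) {t : ℝ}
    (ht : Int.fract ((a:ℝ)*t) ≠ 0) :
    min ((Int.gcd a b : ℝ)/|(a:ℝ)|) ((Int.gcd a b : ℝ)/|(b:ℝ)|)
      ≤ Int.fract ((a:ℝ)*t) + Int.fract ((b:ℝ)*t) := by
  set y := Int.fract ((a:ℝ)*t) with hy
  set w := Int.fract ((b:ℝ)*t) with hw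
  set p := ⌊(a:ℝ)*t⌋ with hp
  set q := ⌊(b:ℝ)*t⌋ with hq
  have hyv : y = (a:ℝ)*t - p := rfl
  have hwv : w = (b:ℝ)*t - q := rfl
  set N : ℤ := b*p - a*q with hN
  have hNr : (N:ℝ) = (-(b:ℝ))*y + (a:ℝ)*w := by
    rw [hyv, hwv, hN]; push_cast; ring
  have hy0 : 0 < y := lt_of_le_of_ne (Int.fract_nonneg _) (Ne.symm ht)
  have hw0 : 0 ≤ w := Int.fract_nonneg _
  have haR : (0:ℝ) < (a:ℝ) := by exact_mod_cast ha
  have hbR : (b:ℝ) < 0 := by exact_mod_cast hb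
  have hN0 : (0:ℝ) < (N:ℝ) := by nlinarith
  have hNpos : 0 < N := by exact_mod_cast hN0
  have hdvd : (Int.gcd a b : ℤ) ∣ N := by
    apply dvd_sub
    · exact Dvd.dvd.mul_right (Int.gcd_dvd_right a b) p
    · exact Dvd.dvd.mul_right (Int.gcd_dvd_left a b) q
  have hgN : (Int.gcd a b : ℤ) ≤ N := Int.le_of_dvd hNpos hdvd
  have hgNr : (Int.gcd a b : ℝ) ≤ (N:ℝ) := by exact_mod_cast hgN
  set A := |(a:ℝ)| with hA
  set B := |(b:ℝ)| with hB
  have hAv : A = (a:ℝ) := abs_of_pos haR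
  have hBv : B = -(b:ℝ) := abs_of_neg hbR
  set C := max A B with hC
  have hApos : 0 < A := by rw [hAv]; exact haR
  have hBpos : 0 < B := by rw [hBv]; linarith
  have hCpos : 0 < C := lt_max_of_lt_left hApos
  have hkey : (Int.gcd a b : ℝ) ≤ C * (y + w) := by
    have h1 : (N:ℝ) = B*y + A*w := by rw [hNr, hAv, hBv]
    have h2 : B*y ≤ C*y := mul_le_mul_of_nonneg_right (le_max_right A B) hy0.le
    have h3 : A*w ≤ C*w := mul_le_mul_of_nonneg_right (le_max_left A B) hw0
    nlinarith
  have hmin : min ((Int.gcd a b : ℝ)/A) ((Int.gcd a b : ℝ)/B) ≤ (Int.gcd a b : ℝ)/C := by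
    rcases max_cases A B with ⟨h1, _⟩ | ⟨h1, _⟩
    · rw [hC, h1]; exact min_le_left _ _
    · rw [hC, h1]; exact min_le_right _ _
  calc min ((Int.gcd a b : ℝ)/A) ((Int.gcd a b : ℝ)/B) ≤ (Int.gcd a b : ℝ)/C := hmin
    _ ≤ y + w := by rw [div_le_iff₀ hCpos]; linarith

lemma natAbs_cast_real (a : ℤ) : ((a.natAbs : ℝ)) = |(a:ℝ)| := by
  simp [Nat.cast_natAbs]

lemma upper_aux_data {a b : ℤ} (hab : a*b < 0) (hne : b ≠ -a) (hle : b.natAbs ≤ a.natAbs) :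
    ∃ x ∈ Ico (0:ℝ) 1, (∃ k : ℤ, (a:ℝ)*x = k) ∧
      Int.fract ((b:ℝ)*x) = (Int.gcd a b : ℝ)/|(a:ℝ)| ∧
      (0:ℝ) < (Int.gcd a b : ℝ)/|(a:ℝ)| := by
  have ha0 : a ≠ 0 := by rintro rfl; simp at hab
  have hb0 : b ≠ 0 := by rintro rfl; simp at hab
  set g : ℕ := Int.gcd a b with hgdef
  set A : ℕ := a.natAbs with hAdef
  have hA0 : 0 < A := Int.natAbs_pos.mpr ha0
  have hgA : g ∣ A := Nat.gcd_dvd_left _ _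
  have hg0 : 0 < g := Int.gcd_pos_of_ne_zero_left b ha0
  have hglt : g < A := by
    rcases lt_or_eq_of_le (Nat.le_of_dvd hA0 hgA) with h | h
    · exact h
    · exfalso
      have hgB : g ∣ b.natAbs := Nat.gcd_dvd_right _ _
      have hB0 : 0 < b.natAbs := Int.natAbs_pos.mpr hb0
      have h1 : A ≤ b.natAbs := Nat.le_of_dvd hB0 (h ▸ hgB)
      have h2 : b.natAbs = A := le_antisymm hle h1
      rcases Int.natAbs_eq_natAbs_iff.mp h2 with h3 | h3
      · rw [h3] at hab
        exact absurd hab (not_lt.mpr (mul_self_nonneg a))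
      · exact hne h3
  have hAZ : ((A:ℤ)) ≠ 0 := by exact_mod_cast hA0.ne'
  set u := Int.gcdB a b with hu
  have hbez : (g:ℤ) = a * Int.gcdA a b + b * u := Int.gcd_eq_gcd_ab a b
  set c : ℤ := u % (A:ℤ) with hc
  have hc0 : 0 ≤ c := Int.emod_nonneg u hAZ
  have hcA : c < (A:ℤ) := Int.emod_lt_of_pos u (by exact_mod_cast hA0)
  set x : ℝ := (c:ℝ)/(A:ℝ) with hx
  have hAR : (0:ℝ) < A := by exact_mod_cast hA0
  refine ⟨x, ⟨div_nonneg (by exact_mod_cast hc0) hAR.le, by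
      rw [hx, div_lt_one hAR]; exact_mod_cast hcA⟩, ?_, ?_, ?_⟩
  · rcases Int.natAbs_eq a with h | h
    · refine ⟨c, ?_⟩
      rw [hx, h]
      push_cast
      field_simp
      rw [← natAbs_cast_real, ← hAdef]; ring
    · refine ⟨-c, ?_⟩
      rw [hx, h]
      push_cast
      field_simp
      rw [← natAbs_cast_real, ← hAdef]; ring
  · have hbc : (b:ℝ)*x = ((b*c : ℤ):ℝ)/((A:ℕ):ℝ) := by
      rw [hx]; push_cast; ring
    have hmodeq : (b*c) % (A:ℤ) = (g:ℤ) % (A:ℤ) := by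
      have h1 : c ≡ u [ZMOD (A:ℤ)] := Int.emod_emod_of_dvd u dvd_rfl
      have h2 : b*c ≡ b*u [ZMOD (A:ℤ)] := h1.mul_left b
      have h3 : b*u ≡ (g:ℤ) [ZMOD (A:ℤ)] := by
        rw [Int.modEq_iff_dvd]
        have : (g:ℤ) - b*u = a * Int.gcdA a b := by rw [hbez]; ring
        rw [this]
        exact Dvd.dvd.mul_right (Int.natAbs_dvd.mpr dvd_rfl) _
      exact h2.trans h3
    have hmod : (b*c) % (A:ℤ) = (g:ℤ) := by
      rw [hmodeq]
      exact Int.emod_eq_of_lt (by exact_mod_cast hg0.le) (by exact_mod_cast hglt)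
    rw [hbc, Int.fract_div_intCast_eq_div_intCast_mod, hmod, ← natAbs_cast_real]
    norm_num
    rw [hAdef, natAbs_cast_real]
  · rw [← natAbs_cast_real]
    exact div_pos (by exact_mod_cast hg0) (by exact_mod_cast hA0)

lemma liminf_le_of_point {a b : ℤ} (ha : a ≠ 0) {x : ℝ} {k : ℤ} (hk : (a:ℝ)*x = k)
    (hb : Int.fract ((b:ℝ)*x) ≠ 0) :
    liminf (Ftwo a b) (𝓝[≠] x) ≤ Int.fract ((b:ℝ)*x) := by
  rcases Ne.lt_or_gt ha with ha' | ha'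
  · have h1 := tendsto_fract_mul_neg ha' hk
    have h2 := (continuousAt_fract_mul hb).mono_left (nhdsWithin_le_nhds : 𝓝[<] x ≤ 𝓝 x)
    have h3 : Tendsto (Ftwo a b) (𝓝[<] x) (𝓝 (0 + Int.fract ((b:ℝ)*x))) := h1.add h2
    rw [zero_add] at h3
    exact liminf_le_of_tendsto_side (s := Iio x) (fun t ht => ne_of_lt ht) h3
  · have h1 := tendsto_fract_mul_pos ha' hk
    have h2 := (continuousAt_fract_mul hb).mono_left (nhdsWithin_le_nhds : 𝓝[>] x ≤ 𝓝 x)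
    have h3 : Tendsto (Ftwo a b) (𝓝[>] x) (𝓝 (0 + Int.fract ((b:ℝ)*x))) := h1.add h2
    rw [zero_add] at h3
    exact liminf_le_of_tendsto_side (s := Ioi x) (fun t ht => ne_of_gt ht) h3

lemma lower_all {a b : ℤ} (hab : a*b < 0) (x : ℝ) :
    min ((Int.gcd a b : ℝ)/|(a:ℝ)|) ((Int.gcd a b : ℝ)/|(b:ℝ)|)
      ≤ liminf (Ftwo a b) (𝓝[≠] x) := by
  rcases mul_neg_iff.mp hab with ⟨ha, hb⟩ | ⟨ha, hb⟩
  · apply le_liminf_of_eventually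
    filter_upwards [eventually_not_int (ne_of_gt ha) x] with t ht
    exact pointwise_bound ha hb ht
  · apply le_liminf_of_eventually
    filter_upwards [eventually_not_int (ne_of_gt hb) x] with t ht
    have h2 : min ((Int.gcd b a : ℝ)/|(b:ℝ)|) ((Int.gcd b a : ℝ)/|(a:ℝ)|)
        ≤ Int.fract ((b:ℝ)*t) + Int.fract ((a:ℝ)*t) := pointwise_bound hb ha ht
    rw [Int.gcd_comm b a, min_comm] at h2
    unfold Ftwo
    linarith

theorem hinf_two_integers (a b : ℤ) (hab : ¬(a = 0 ∧ b = 0)) :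
    (0 ≤ a * b → hinf ![a, b] = 0) ∧
    (a * b < 0 → hinf ![a, b] =
      min ((Int.gcd a b : ℝ) / |(a : ℝ)|) ((Int.gcd a b : ℝ) / |(b : ℝ)|)) := by
  constructor
  · -- same sign case
    intro h
    have key : fx ![a,b] 0 = 0 := by
      rw [fx_eq]
      refine le_antisymm ?_ (liminf_Ftwo_nonneg a b 0)
      have hsigns : (0 ≤ a ∧ 0 ≤ b) ∨ (a ≤ 0 ∧ b ≤ 0) := by
        rcases le_or_gt 0 a with ha | ha <;> rcases le_or_gt 0 b with hb | hb
        · exact Or.inl ⟨ha, hb⟩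
        · right
          refine ⟨?_, hb.le⟩
          rcases ha.lt_or_eq with ha' | ha'
          · exact absurd h (not_le.mpr (mul_neg_of_pos_of_neg ha' hb))
          · exact le_of_eq ha'.symm
        · right
          refine ⟨ha.le, ?_⟩
          rcases hb.lt_or_eq with hb' | hb'
          · exact absurd h (not_le.mpr (mul_neg_of_neg_of_pos ha hb'))
          · exact le_of_eq hb'.symm
        · exact Or.inr ⟨ha.le, hb.le⟩
      rcases hsigns with ⟨ha, hb⟩ | ⟨ha, hb⟩
      · -- approach from the right
        have taux : ∀ c : ℤ, 0 ≤ c →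
            Tendsto (fun t : ℝ => Int.fract ((c:ℝ)*t)) (𝓝[>] (0:ℝ)) (𝓝 0) := by
          intro c hc
          rcases hc.lt_or_eq with hc' | hc'
          · exact tendsto_fract_mul_pos hc' (k := 0) (by simp)
          · rw [← hc']
            simpa using tendsto_const_nhds
        have h3 : Tendsto (Ftwo a b) (𝓝[>] (0:ℝ)) (𝓝 (0 + 0)) :=
          (taux a ha).add (taux b hb)
        rw [add_zero] at h3
        exact liminf_le_of_tendsto_side (s := Ioi (0:ℝ)) (fun t ht => ne_of_gt ht) h3
      · -- approach from the left
        have taux : ∀ c : ℤ, c ≤ 0 →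
            Tendsto (fun t : ℝ => Int.fract ((c:ℝ)*t)) (𝓝[<] (0:ℝ)) (𝓝 0) := by
          intro c hc
          rcases hc.lt_or_eq with hc' | hc'
          · exact tendsto_fract_mul_neg hc' (k := 0) (by simp)
          · rw [hc']
            simpa using tendsto_const_nhds
        have h3 : Tendsto (Ftwo a b) (𝓝[<] (0:ℝ)) (𝓝 (0 + 0)) :=
          (taux a ha).add (taux b hb)
        rw [add_zero] at h3
        exact liminf_le_of_tendsto_side (s := Iio (0:ℝ)) (fun t ht => ne_of_lt ht) h3
    have hmem : (0:ℝ) ∈ fx ![a,b] '' Ico (0:ℝ) 1 :=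
      ⟨0, ⟨le_refl 0, zero_lt_one⟩, key⟩
    have hlb : ∀ y ∈ fx ![a,b] '' Ico (0:ℝ) 1, (0:ℝ) ≤ y := by
      rintro y ⟨z, -, rfl⟩
      exact fx_two_nonneg a b z
    exact le_antisymm (csInf_le ⟨0, fun y hy => hlb y hy⟩ hmem) (le_csInf ⟨0, hmem⟩ hlb)
  · -- opposite sign case
    intro h
    have ha0 : a ≠ 0 := by rintro rfl; simp at h
    have hb0 : b ≠ 0 := by rintro rfl; simp at h
    set M := min ((Int.gcd a b : ℝ) / |(a : ℝ)|) ((Int.gcd a b : ℝ) / |(b : ℝ)|) with hM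
    have hlower : ∀ y ∈ fx ![a,b] '' Ico (0:ℝ) 1, M ≤ y := by
      rintro y ⟨z, -, rfl⟩
      rw [fx_eq]
      exact lower_all h z
    have hupper : ∃ x ∈ Ico (0:ℝ) 1, fx ![a,b] x ≤ M := by
      by_cases hba : b = -a
      · -- b = -a : fx at 0 equals 1 = M
        refine ⟨0, ⟨le_refl 0, zero_lt_one⟩, ?_⟩
        have hM1 : M = 1 := by
          have hg : Int.gcd a b = a.natAbs := by
            rw [hba]; simp [Int.gcd]
          have habs : |(b:ℝ)| = |(a:ℝ)| := by rw [hba]; push_cast; rw [abs_neg]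
          have haR : |(a:ℝ)| ≠ 0 := by
            simp [abs_ne_zero, Int.cast_ne_zero, ha0]
          rw [hM, hg, habs, natAbs_cast_real, div_self haR, min_self]
        rw [hM1, fx_eq]
        have hev : ∀ᶠ t in 𝓝[≠] (0:ℝ), Ftwo a b t = 1 := by
          filter_upwards [eventually_not_int ha0 (0:ℝ)] with t ht
          have hbt : (b:ℝ)*t = -((a:ℝ)*t) := by rw [hba]; push_cast; ring
          unfold Ftwo
          rw [hbt, Int.fract_neg ht]
          ring
        rw [liminf_congr hev, liminf_const]
      · rcases le_or_gt b.natAbs a.natAbs with hle | hlt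
        · obtain ⟨x, hx, ⟨k, hk⟩, hfrac, hpos⟩ := upper_aux_data h hba hle
          refine ⟨x, hx, ?_⟩
          rw [fx_eq]
          have hfne : Int.fract ((b:ℝ)*x) ≠ 0 := by rw [hfrac]; exact hpos.ne'
          have h1 : liminf (Ftwo a b) (𝓝[≠] x) ≤ Int.fract ((b:ℝ)*x) :=
            liminf_le_of_point ha0 hk hfne
          rw [hfrac] at h1
          have habs : |(b:ℝ)| ≤ |(a:ℝ)| := by
            rw [← natAbs_cast_real, ← natAbs_cast_real]
            exact_mod_cast hle
          have hbpos : (0:ℝ) < |(b:ℝ)| := abs_pos.mpr (Int.cast_ne_zero.mpr hb0)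
          have hgnn : (0:ℝ) ≤ (Int.gcd a b : ℝ) := Nat.cast_nonneg _
          have hMeq : M = (Int.gcd a b : ℝ)/|(a:ℝ)| := min_eq_left (by gcongr)
          rw [hMeq]
          exact h1
        · have h' : b*a < 0 := by rw [mul_comm]; exact h
          have hne' : a ≠ -b := by
            intro he
            exact hba (by rw [he]; ring)
          obtain ⟨x, hx, ⟨k, hk⟩, hfrac, hpos⟩ := upper_aux_data h' hne' hlt.le
          refine ⟨x, hx, ?_⟩
          rw [fx_eq, Ftwo_comm]
          have hfne : Int.fract ((a:ℝ)*x) ≠ 0 := by rw [hfrac]; exact hpos.ne'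
          have h1 : liminf (Ftwo b a) (𝓝[≠] x) ≤ Int.fract ((a:ℝ)*x) :=
            liminf_le_of_point hb0 hk hfne
          rw [hfrac, Int.gcd_comm b a] at h1
          have habs : |(a:ℝ)| ≤ |(b:ℝ)| := by
            rw [← natAbs_cast_real, ← natAbs_cast_real]
            exact_mod_cast hlt.le
          have hapos : (0:ℝ) < |(a:ℝ)| := abs_pos.mpr (Int.cast_ne_zero.mpr ha0)
          have hgnn : (0:ℝ) ≤ (Int.gcd a b : ℝ) := Nat.cast_nonneg _
          have hMeq : M = (Int.gcd a b : ℝ)/|(b:ℝ)| := min_eq_right (by gcongr)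
          rw [hMeq]
          exact h1
    obtain ⟨x, hx, hxle⟩ := hupper
    have hbdd : BddBelow (fx ![a,b] '' Ico (0:ℝ) 1) := ⟨M, fun y hy => hlower y hy⟩
    have hne : (fx ![a,b] '' Ico (0:ℝ) 1).Nonempty := ⟨fx ![a,b] x, ⟨x, hx, rfl⟩⟩
    exact le_antisymm ((csInf_le hbdd ⟨x, hx, rfl⟩).trans hxle) (le_csInf hne hlower)
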